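/- Let X_1,...,X_n be independent nonnegative random variables with E[X_i] = μ_i and 0 < μ_1 ≤ μ_2 ≤ ... ≤ μ_n. Then for every α ∈ (k−1, k] with k ∈ {1,...,n}, E[(min{X_1,...,X_n})^α] ≤ μ_1 ⋯ μ_{k−1} (μ_k)^{α−k+1}. -/

import Mathlib

open MeasureTheory ProbabilityTheory

private lemma aux_prod_integral {Ω : Type*} [MeasurableSpace Ω] (P : Measure Ω)
    [IsProbabilityMeasure P] {n : ℕ} (Y : Fin n → Ω → ℝ)
    (hmeas : ∀ i, Measurable (Y i))
    (hindep : iIndepFun Y P)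
    (hint : ∀ i, Integrable (Y i) P) (s : Finset (Fin n)) :
    Integrable (fun ω => ∏ i ∈ s, Y i ω) P ∧
      ∫ ω, ∏ i ∈ s, Y i ω ∂P = ∏ i ∈ s, ∫ ω, Y i ω ∂P := by
  classical
  induction s using Finset.induction with
  | empty => simp [integrable_const (1 : ℝ)]
  | @insert i s hi ih =>
    have hF : (fun ω => ∏ j ∈ s, Y j ω) = ∏ j ∈ s, Y j := by
      funext ω; simp
    have hindep' : IndepFun (fun ω => ∏ j ∈ s, Y j ω) (Y i) P := by
      rw [hF]
      exact hindep.indepFun_finsetProd_of_notMem hmeas hi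
    have hprodint : Integrable (fun ω => ∏ j ∈ s, Y j ω) P := ih.1
    have hmul : Integrable ((fun ω => ∏ j ∈ s, Y j ω) * Y i) P :=
      hindep'.integrable_mul hprodint (hint i)
    constructor
    · refine hmul.congr ?_
      filter_upwards with ω
      rw [Finset.prod_insert hi, mul_comm]
      rfl
    · have hI := hindep'.integral_mul_eq_mul_integral hprodint.aestronglyMeasurable (hint i).aestronglyMeasurable
      simp only [Finset.prod_insert hi]
      calc ∫ ω, Y i ω * ∏ j ∈ s, Y j ω ∂P
          = ∫ ω, ((fun ω => ∏ j ∈ s, Y j ω) * Y i) ω ∂P := by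
            congr 1; funext ω; simp [mul_comm]
        _ = (∫ ω, ∏ j ∈ s, Y j ω ∂P) * ∫ ω, Y i ω ∂P := hI
        _ = (∫ ω, Y i ω ∂P) * ∏ j ∈ s, ∫ ω, Y j ω ∂P := by rw [ih.2, mul_comm]

private lemma aux_jensen_rpow {Ω : Type*} [MeasurableSpace Ω] (P : Measure Ω)
    [IsProbabilityMeasure P] (X : Ω → ℝ) (m : ℝ) (hm : 0 < m)
    (hnn : ∀ ω, 0 ≤ X ω) (hint : Integrable X P)
    (hmean : ∫ ω, X ω ∂P = m) {e : ℝ} (he0 : 0 < e) (he1 : e ≤ 1) :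
    ∫ ω, X ω ^ e ∂P ≤ m ^ e := by
  have key : ∀ x : ℝ, 0 ≤ x → x ^ e ≤ m ^ e + e * (m ^ e / m) * (x - m) := by
    intro x hx
    have hs : (-1 : ℝ) ≤ x / m - 1 := by
      have : 0 ≤ x / m := div_nonneg hx hm.le
      linarith
    have hB := rpow_one_add_le_one_add_mul_self hs he0.le he1
    have hx' : x = m * (1 + (x / m - 1)) := by field_simp; ring
    have h1s : 0 ≤ 1 + (x / m - 1) := by linarith
    have hme : 0 ≤ m ^ e := Real.rpow_nonneg hm.le e
    calc x ^ e = (m * (1 + (x / m - 1))) ^ e := by rw [← hx']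
      _ = m ^ e * (1 + (x / m - 1)) ^ e := Real.mul_rpow hm.le h1s
      _ ≤ m ^ e * (1 + e * (x / m - 1)) := mul_le_mul_of_nonneg_left hB hme
      _ = m ^ e + e * (m ^ e / m) * (x - m) := by field_simp
  have hsub : Integrable (fun ω => X ω - m) P := hint.sub (integrable_const m)
  have hmul : Integrable (fun ω => e * (m ^ e / m) * (X ω - m)) P := hsub.const_mul _
  have hgint : Integrable (fun ω => m ^ e + e * (m ^ e / m) * (X ω - m)) P :=
    (integrable_const _).add hmul
  calc ∫ ω, X ω ^ e ∂P ≤ ∫ ω, m ^ e + e * (m ^ e / m) * (X ω - m) ∂P := by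
        apply integral_mono_of_nonneg
        · filter_upwards with ω; exact Real.rpow_nonneg (hnn ω) e
        · exact hgint
        · filter_upwards with ω; exact key _ (hnn ω)
    _ = m ^ e := by
        rw [integral_add (integrable_const _) hmul, integral_const, integral_const_mul]
        have : ∫ ω, X ω - m ∂P = 0 := by
          rw [integral_sub hint (integrable_const m), integral_const, hmean]
          simp
        rw [this]
        simp

theorem moment_min_le_of_sorted_means
    {Ω : Type*} [MeasurableSpace Ω] (P : Measure Ω) [IsProbabilityMeasure P]
    {n : ℕ} (hn : 1 ≤ n) (X : Fin n → Ω → ℝ) (μ : Fin n → ℝ)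
    (hμ : ∀ i, 0 < μ i) (hsorted : Monotone μ)
    (hmeas : ∀ i, Measurable (X i))
    (hnonneg : ∀ i ω, 0 ≤ X i ω)
    (hindep : iIndepFun X P)
    (hint : ∀ i, Integrable (X i) P)
    (hmean : ∀ i, ∫ ω, X i ω ∂P = μ i)
    (k : ℕ) (hk : 1 ≤ k) (hkn : k ≤ n)
    (α : ℝ) (hα : (k : ℝ) - 1 < α) (hα' : α ≤ k) :
    ∫ ω, (⨅ i, X i ω) ^ α ∂P ≤
      (∏ i ∈ Finset.univ.filter (fun i : Fin n => (i : ℕ) < k - 1), μ i) *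
        (μ ⟨k - 1, by omega⟩) ^ (α - k + 1) := by
  classical
  haveI : Nonempty (Fin n) := ⟨⟨0, by omega⟩⟩
  have hk1 : (1 : ℝ) ≤ (k : ℝ) := by exact_mod_cast hk
  set e : ℝ := α - k + 1 with he_def
  have he0 : 0 < e := by simp only [he_def]; linarith
  have he1 : e ≤ 1 := by simp only [he_def]; linarith
  set j : Fin n := ⟨k - 1, by omega⟩ with hj_def
  set Y : Fin n → Ω → ℝ := fun i ω => if (i : ℕ) < k - 1 then X i ω else X i ω ^ e
    with hY_def
  have hYmeas : ∀ i, Measurable (Y i) := by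
    intro i
    by_cases h : (i : ℕ) < k - 1 <;> simp only [hY_def, h, if_true, if_false]
    · exact hmeas i
    · exact (Real.continuous_rpow_const he0.le).measurable.comp (hmeas i)
  have hYnn : ∀ i ω, 0 ≤ Y i ω := by
    intro i ω
    by_cases h : (i : ℕ) < k - 1 <;> simp only [hY_def, h, if_true, if_false]
    · exact hnonneg i ω
    · exact Real.rpow_nonneg (hnonneg i ω) e
  have hYindep : iIndepFun Y P := by
    have := hindep.comp (fun i x => if (i : ℕ) < k - 1 then x else x ^ e)
      (fun i => by
        by_cases h : (i : ℕ) < k - 1 <;> simp only [h, if_true, if_false]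
        · exact measurable_id
        · exact (Real.continuous_rpow_const he0.le).measurable)
    exact this
  have hYint : ∀ i, Integrable (Y i) P := by
    intro i
    by_cases h : (i : ℕ) < k - 1 <;> simp only [hY_def, h, if_true, if_false]
    · exact hint i
    · refine ((integrable_const (1 : ℝ)).add (hint i)).mono
        (((Real.continuous_rpow_const he0.le).measurable.comp (hmeas i)).aestronglyMeasurable) ?_
      filter_upwards with ω
      have hx := hnonneg i ω
      have hb : X i ω ^ e ≤ 1 + X i ω := by
        rcases le_or_gt (X i ω) 1 with hle | hgt
        · have := Real.rpow_le_one hx hle he0.le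
          linarith
        · have := Real.rpow_le_rpow_of_exponent_le hgt.le he1
          rw [Real.rpow_one] at this
          linarith
      rw [Real.norm_of_nonneg (Real.rpow_nonneg hx e)]
      refine hb.trans (le_abs_self _)
  set t := Finset.univ.filter (fun i : Fin n => (i : ℕ) < k - 1) with ht_def
  set s := Finset.univ.filter (fun i : Fin n => (i : ℕ) < k) with hs_def
  have hjt : j ∉ t := by simp [ht_def, hj_def]
  have hst : s = insert j t := by
    ext i
    simp only [hs_def, ht_def, Finset.mem_filter, Finset.mem_univ, true_and,
      Finset.mem_insert, hj_def, Fin.ext_iff]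
    omega
  have htcard : t.card = k - 1 := by
    have : t = Finset.Iio j := by
      ext i
      simp [ht_def, Finset.mem_Iio, Fin.lt_def, hj_def]
    rw [this, Fin.card_Iio]
  -- pointwise bound
  have hpt : ∀ ω, (⨅ i, X i ω) ^ α ≤ ∏ i ∈ s, Y i ω := by
    intro ω
    set m := ⨅ i, X i ω with hm_def
    have hm0 : 0 ≤ m := le_ciInf fun i => hnonneg i ω
    have hbdd : BddBelow (Set.range fun i => X i ω) :=
      ⟨0, by rintro x ⟨i, rfl⟩; exact hnonneg i ω⟩
    have hmle : ∀ i, m ≤ X i ω := fun i => ciInf_le hbdd i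
    have hprod_nn : 0 ≤ ∏ i ∈ s, Y i ω :=
      Finset.prod_nonneg fun i _ => hYnn i ω
    rcases hm0.eq_or_lt with hm | hm
    · rw [← hm, Real.zero_rpow (by linarith : (0:ℝ) < α).ne']
      exact hprod_nn
    · have hsplit : m ^ α = m ^ (k - 1 : ℕ) * m ^ e := by
        rw [← Real.rpow_natCast m (k - 1), ← Real.rpow_add hm]
        congr 1
        have : ((k - 1 : ℕ) : ℝ) = (k : ℝ) - 1 := by
          push_cast [Nat.cast_sub hk]; ring
        rw [this, he_def]; ring
      have h1 : m ^ (k - 1 : ℕ) ≤ ∏ i ∈ t, X i ω := by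
        calc m ^ (k - 1 : ℕ) = ∏ _i ∈ t, m := by rw [Finset.prod_const, htcard]
          _ ≤ ∏ i ∈ t, X i ω :=
            Finset.prod_le_prod (fun _ _ => hm0) (fun i _ => hmle i)
      have h2 : m ^ e ≤ X j ω ^ e := Real.rpow_le_rpow hm0 (hmle j) he0.le
      have hYt : ∀ i ∈ t, Y i ω = X i ω := by
        intro i hi
        simp only [ht_def, Finset.mem_filter] at hi
        simp [hY_def, hi.2]
      have hYj : Y j ω = X j ω ^ e := by
        simp [hY_def, hj_def]
      calc m ^ α = m ^ (k - 1 : ℕ) * m ^ e := hsplit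
        _ ≤ (∏ i ∈ t, X i ω) * (X j ω ^ e) := by
            apply mul_le_mul h1 h2 (Real.rpow_nonneg hm0 e)
            exact Finset.prod_nonneg fun i _ => hnonneg i ω
        _ = ∏ i ∈ s, Y i ω := by
            rw [hst, Finset.prod_insert hjt, mul_comm, hYj,
              Finset.prod_congr rfl hYt]
  obtain ⟨hPint, hPeq⟩ := aux_prod_integral P Y hYmeas hYindep hYint s
  have hjensen : ∫ ω, X j ω ^ e ∂P ≤ μ j ^ e :=
    aux_jensen_rpow P (X j) (μ j) (hμ j) (hnonneg j) (hint j) (hmean j) he0 he1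
  have htnn : 0 ≤ ∏ i ∈ t, μ i := Finset.prod_nonneg fun i _ => (hμ i).le
  calc ∫ ω, (⨅ i, X i ω) ^ α ∂P ≤ ∫ ω, ∏ i ∈ s, Y i ω ∂P := by
        apply integral_mono_of_nonneg
        · filter_upwards with ω
          exact Real.rpow_nonneg (le_ciInf fun i => hnonneg i ω) α
        · exact hPint
        · filter_upwards with ω; exact hpt ω
    _ = ∏ i ∈ s, ∫ ω, Y i ω ∂P := hPeq
    _ = (∏ i ∈ t, μ i) * ∫ ω, X j ω ^ e ∂P := by
        rw [hst, Finset.prod_insert hjt, mul_comm]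
        congr 1
        · refine Finset.prod_congr rfl fun i hi => ?_
          simp only [ht_def, Finset.mem_filter] at hi
          simp only [hY_def, hi.2, if_true]
          exact hmean i
        · simp [hY_def, hj_def]
    _ ≤ (∏ i ∈ t, μ i) * μ j ^ e := mul_le_mul_of_nonneg_left hjensen htnn
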